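/- Let φ₁, φ₂, ψ₁, ψ₂ : ℤ² → ℂ and α, β : ℤ² → ℂ satisfy, at every point (n,m) ∈ ℤ² and for i = 1,2, the discrete Dirac equation φᵢ(n,m+1) = α(n,m)·φᵢ(n,m) + β(n,m)·ψᵢ(n,m), ψᵢ(n+1,m) = conj(β(n,m))·φᵢ(n,m) + conj(α(n,m))·ψᵢ(n,m), together with |α(n,m)|² − |β(n,m)|² = 1. Define F, G : ℤ² → ℝ⁴ by F(n,m) = (Re(φ₁·conj(φ₂)), −Im(φ₁·conj(φ₂)), (|φ₁|² − |φ₂|²)/2, (|φ₁|² + |φ₂|²)/2) and G(n,m) by the same formulas with ψ₁, ψ₂ in place of φ₁, φ₂. Then the consistency condition F(n,m+1) − F(n,m) = G(n+1,m) − G(n,m) holds for all (n,m) ∈ ℤ², so that F and G are the edge functions of a discrete surface X : ℤ² → ℝ⁴ (unique up to translation). -/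

import Mathlib

lemma int_antideriv {V : Type*} [AddCommGroup V] (f : ℤ → V) :
    ∃ h : ℤ → V, h 0 = 0 ∧ ∀ k : ℤ, h (k + 1) - h k = f k := by
  refine ⟨fun k => (∑ i ∈ Finset.range k.toNat, f i) -
      ∑ i ∈ Finset.range (-k).toNat, f (-(i : ℤ) - 1), by simp, fun k => ?_⟩
  rcases le_or_gt 0 k with hk | hk
  · have h1 : (k + 1).toNat = k.toNat + 1 := by omega
    have h2 : (-(k + 1)).toNat = 0 := by omega
    have h3 : (-k).toNat = 0 := by omega
    have h4 : ((k.toNat : ℤ)) = k := by omega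
    simp only [h1, h2, h3, Finset.sum_range_succ, Finset.range_zero,
      Finset.sum_empty, h4]
    abel
  · have h1 : (k + 1).toNat = 0 := by omega
    have h2 : k.toNat = 0 := by omega
    have h3 : (-k).toNat = (-(k + 1)).toNat + 1 := by omega
    have h4 : -(((-(k + 1)).toNat : ℤ)) - 1 = k := by omega
    simp only [h1, h2, h3, Finset.sum_range_succ, Finset.range_zero,
      Finset.sum_empty, h4]
    abel

lemma int_eq_of_diff_eq {V : Type*} [AddCommGroup V] (d e : ℤ → V)
    (h0 : d 0 = e 0) (hstep : ∀ k : ℤ, d (k + 1) - d k = e (k + 1) - e k) :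
    ∀ m : ℤ, d m = e m := by
  intro m
  induction m using Int.induction_on with
  | zero => exact h0
  | succ k ih =>
    have h : d (k + 1) = (e (k + 1) - e k) + d k := by rw [← hstep k]; abel
    rw [h, ih]; abel
  | pred k ih =>
    have h := hstep (-(k : ℤ) - 1)
    have hk : (-(k : ℤ) - 1) + 1 = -k := by ring
    rw [hk] at h
    have h2 : d (-(k : ℤ) - 1) = d (-(k:ℤ)) - (e (-(k:ℤ)) - e (-(k:ℤ) - 1)) := by
      rw [← h]; abel
    rw [h2, ih]; abel

/-- Solutions of the discrete Dirac equation in the ℝ^{3,1} case satisfy the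
consistency condition, so the edge functions F, G integrate to a discrete surface
X : ℤ² → ℝ⁴ (unique up to translation). -/
theorem discrete_weierstrass_R31_consistency
    (φ₁ φ₂ ψ₁ ψ₂ : ℤ × ℤ → ℂ) (α β : ℤ × ℤ → ℂ)
    (hφ₁ : ∀ n m : ℤ, φ₁ (n, m + 1) = α (n, m) * φ₁ (n, m) + β (n, m) * ψ₁ (n, m))
    (hφ₂ : ∀ n m : ℤ, φ₂ (n, m + 1) = α (n, m) * φ₂ (n, m) + β (n, m) * ψ₂ (n, m))
    (hψ₁ : ∀ n m : ℤ, ψ₁ (n + 1, m) =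
      (starRingEnd ℂ) (β (n, m)) * φ₁ (n, m) + (starRingEnd ℂ) (α (n, m)) * ψ₁ (n, m))
    (hψ₂ : ∀ n m : ℤ, ψ₂ (n + 1, m) =
      (starRingEnd ℂ) (β (n, m)) * φ₂ (n, m) + (starRingEnd ℂ) (α (n, m)) * ψ₂ (n, m))
    (hαβ : ∀ n m : ℤ, ‖α (n, m)‖ ^ 2 - ‖β (n, m)‖ ^ 2 = 1)
    (F G : ℤ × ℤ → ℝ × ℝ × ℝ × ℝ)
    (hF : ∀ n m : ℤ, F (n, m) =
      ((φ₁ (n, m) * (starRingEnd ℂ) (φ₂ (n, m))).re,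
       -(φ₁ (n, m) * (starRingEnd ℂ) (φ₂ (n, m))).im,
       (‖φ₁ (n, m)‖ ^ 2 - ‖φ₂ (n, m)‖ ^ 2) / 2,
       (‖φ₁ (n, m)‖ ^ 2 + ‖φ₂ (n, m)‖ ^ 2) / 2))
    (hG : ∀ n m : ℤ, G (n, m) =
      ((ψ₁ (n, m) * (starRingEnd ℂ) (ψ₂ (n, m))).re,
       -(ψ₁ (n, m) * (starRingEnd ℂ) (ψ₂ (n, m))).im,
       (‖ψ₁ (n, m)‖ ^ 2 - ‖ψ₂ (n, m)‖ ^ 2) / 2,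
       (‖ψ₁ (n, m)‖ ^ 2 + ‖ψ₂ (n, m)‖ ^ 2) / 2)) :
    (∀ n m : ℤ, F (n, m + 1) - F (n, m) = G (n + 1, m) - G (n, m)) ∧
    ∃ X : ℤ × ℤ → ℝ × ℝ × ℝ × ℝ, ∀ n m : ℤ,
      F (n, m) = X (n + 1, m) - X (n, m) ∧ G (n, m) = X (n, m + 1) - X (n, m) := by
  have key : ∀ n m : ℤ, F (n, m + 1) - F (n, m) = G (n + 1, m) - G (n, m) := by
    intro n m
    rw [hF, hF, hG, hG, hφ₁, hφ₂, hψ₁, hψ₂]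
    set p1 := φ₁ (n, m); set p2 := φ₂ (n, m); set q1 := ψ₁ (n, m); set q2 := ψ₂ (n, m)
    have h := hαβ n m
    rw [Complex.sq_norm, Complex.sq_norm, Complex.normSq_apply, Complex.normSq_apply] at h
    simp only [Prod.mk_sub_mk, Prod.mk.injEq, Complex.sq_norm, Complex.normSq_apply,
      Complex.mul_re, Complex.mul_im, Complex.add_re, Complex.add_im,
      Complex.conj_re, Complex.conj_im]
    refine ⟨?_, ?_, ?_, ?_⟩
    · linear_combination (p1.re*p2.re + p1.im*p2.im - q1.re*q2.re - q1.im*q2.im) * h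
    · linear_combination (-(p1.im*p2.re - p1.re*p2.im) + (q1.im*q2.re - q1.re*q2.im)) * h
    · linear_combination ((p1.re^2+p1.im^2 - p2.re^2-p2.im^2
        - q1.re^2-q1.im^2 + q2.re^2+q2.im^2)/2) * h
    · linear_combination ((p1.re^2+p1.im^2 + p2.re^2+p2.im^2
        - q1.re^2-q1.im^2 - q2.re^2-q2.im^2)/2) * h
  refine ⟨key, ?_⟩
  obtain ⟨A, hA0, hA⟩ := int_antideriv (fun n => F (n, 0))
  have hB : ∀ n : ℤ, ∃ B : ℤ → ℝ × ℝ × ℝ × ℝ, B 0 = 0 ∧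
      ∀ m : ℤ, B (m + 1) - B m = G (n, m) := fun n => int_antideriv (fun m => G (n, m))
  choose B hB0 hBs using hB
  refine ⟨fun p => A p.1 + B p.1 p.2, fun n m => ?_⟩
  have hd : ∀ m : ℤ, B (n + 1) m - B n m = F (n, m) - F (n, 0) := by
    apply int_eq_of_diff_eq (fun m => B (n + 1) m - B n m) (fun m => F (n, m) - F (n, 0))
    · simp [hB0]
    · intro k
      have h1 := hBs (n + 1) k
      have h2 := hBs n k
      have h3 := key n k
      show (B (n+1) (k+1) - B n (k+1)) - (B (n+1) k - B n k)
        = (F (n, k+1) - F (n, 0)) - (F (n, k) - F (n, 0))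
      have : (B (n+1) (k+1) - B n (k+1)) - (B (n+1) k - B n k)
          = (B (n+1) (k+1) - B (n+1) k) - (B n (k+1) - B n k) := by abel
      rw [this, h1, h2, ← h3]; abel
  constructor
  · show F (n, m) = (A (n + 1) + B (n + 1) m) - (A n + B n m)
    have h1 := hA n
    have h2 := hd m
    have : (A (n + 1) + B (n + 1) m) - (A n + B n m)
        = (A (n + 1) - A n) + (B (n + 1) m - B n m) := by abel
    rw [this, h1, h2]; abel
  · show G (n, m) = (A n + B n (m + 1)) - (A n + B n m)
    have h2 := hBs n m
    rw [← h2]; abel
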